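/- With the operators b_τ, c_τ, d_τ and (semi)norms ‖·‖_{m_τ}, ‖·‖_{s_τ}, ‖·‖_{n_τ} defined as below, for every v_2 ∈ V_2 one has the identity ‖v_2‖_{n_τ}² = (τ²/2)‖v_2 - d_τ(v_2)‖_a², i.e. (τ²/2)‖v_2‖_a² - ‖c_τ(v_2)‖_{m_τ}² - ‖d_τ(v_2)‖_{s_τ}² = (τ²/2)‖v_2 - d_τ(v_2)‖_a². In particular ‖v_2‖_{n_τ}² ≥ 0. -/
import Mathlib


open RealInnerProductSpace

theorem stmt11 {V : Type*} [NormedAddCommGroup V] [InnerProductSpace ℝ V]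
    [FiniteDimensional ℝ V]
    (a : V →ₗ[ℝ] V →ₗ[ℝ] ℝ) (hsymm : ∀ x y, a x y = a y x)
    (hpd : ∀ v : V, v ≠ 0 → 0 < a v v)
    (τ : ℝ) (hτ : 0 < τ)
    (V1 V2 : Submodule ℝ V) (b c d : V → V)
    (hbmem : ∀ v1 ∈ V1, b v1 ∈ V1)
    (hb : ∀ v1 ∈ V1, ∀ v ∈ V1,
      ⟪b v1, v⟫ + (τ^2 / 2) * a (b v1) v = ⟪v1, v⟫)
    (hcmem : ∀ u ∈ V1 ⊔ V2, c u ∈ V1)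
    (hc : ∀ u ∈ V1 ⊔ V2, ∀ v ∈ V1,
      ⟪c u, v⟫ + (τ^2 / 2) * a (c u) v = (τ^2 / 2) * a u v)
    (hdmem : ∀ u ∈ V1 ⊔ V2, d u ∈ V1)
    (hd : ∀ u ∈ V1 ⊔ V2, ∀ v ∈ V1, a (d u) v = a u v) :
    ∀ v2 ∈ V2,
      ((τ^2 / 2) * a v2 v2
          - (⟪c v2, c v2⟫ + (τ^2 / 2) * a (c v2) (c v2))
          - (⟪d v2, d v2⟫
              - (⟪b (d v2), b (d v2)⟫ + (τ^2 / 2) * a (b (d v2)) (b (d v2))))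
        = (τ^2 / 2) * a (v2 - d v2) (v2 - d v2)) ∧
      0 ≤ (τ^2 / 2) * a v2 v2
          - (⟪c v2, c v2⟫ + (τ^2 / 2) * a (c v2) (c v2))
          - (⟪d v2, d v2⟫
              - (⟪b (d v2), b (d v2)⟫ + (τ^2 / 2) * a (b (d v2)) (b (d v2)))) := by

  intro v2 hv2
  have hv2' : v2 ∈ V1 ⊔ V2 := Submodule.mem_sup_right hv2
  have hdm : d v2 ∈ V1 := hdmem _ hv2'
  have hcm : c v2 ∈ V1 := hcmem _ hv2'
  have hbm : b (d v2) ∈ V1 := hbmem _ hdm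
  -- uniqueness lemma
  have hzero : ∀ w ∈ V1, (∀ v ∈ V1, ⟪w, v⟫ + (τ^2 / 2) * a w v = 0) → w = 0 := by
    intro w hw h
    by_contra hne
    have h1 := h w hw
    have h2 : (0:ℝ) ≤ ⟪w, w⟫ := real_inner_self_nonneg
    have h3 := hpd w hne
    have h4 : (0:ℝ) < (τ^2 / 2) * a w w := by positivity
    linarith
  have hw1 : c v2 + b (d v2) - d v2 ∈ V1 := sub_mem (add_mem hcm hbm) hdm
  have hmw : ∀ v ∈ V1, ⟪c v2 + b (d v2) - d v2, v⟫
      + (τ^2 / 2) * a (c v2 + b (d v2) - d v2) v = 0 := by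
    intro v hv
    have h1 := hc v2 hv2' v hv
    have h2 := hb (d v2) hdm v hv
    have h3 := hd v2 hv2' v hv
    simp only [inner_add_left, inner_sub_left, map_add, map_sub, LinearMap.add_apply,
      LinearMap.sub_apply]
    linear_combination h1 + h2 - (τ^2 / 2) * h3
  have hw0 : c v2 + b (d v2) - d v2 = 0 := hzero _ hw1 hmw
  have key : c v2 = d v2 - b (d v2) := eq_sub_of_add_eq (eq_of_sub_eq_zero hw0)
  have hb1 := hb (d v2) hdm (d v2) hdm
  have hd1 := hd v2 hv2' (d v2) hdm
  have main : (τ^2 / 2) * a v2 v2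
      - (⟪c v2, c v2⟫ + (τ^2 / 2) * a (c v2) (c v2))
      - (⟪d v2, d v2⟫
          - (⟪b (d v2), b (d v2)⟫ + (τ^2 / 2) * a (b (d v2)) (b (d v2))))
      = (τ^2 / 2) * a (v2 - d v2) (v2 - d v2) := by
    rw [key]
    have hd2 := hd v2 hv2' (b (d v2)) hbm
    simp only [map_sub, LinearMap.sub_apply, inner_sub_left, inner_sub_right]
    linear_combination 2 * hb1 - real_inner_comm (d v2) (b (d v2))
      - (τ^2 / 2) * hsymm (b (d v2)) (d v2) + (τ^2 / 2) * hsymm (d v2) v2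
      - 2 * (τ^2 / 2) * hd1
  refine ⟨main, ?_⟩
  rw [main]
  rcases eq_or_ne (v2 - d v2) 0 with h | h
  · simp [h]
  · have := hpd _ h
    positivity
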